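/- Let 𝐀 and 𝐁 be σ-structures. If 𝐀 and 𝐁 have a common equitable partition, then they have the same iterated degree sequence: for every j ≥ 0, whenever a ∈ P_i^𝐀 and b ∈ P_i^𝐁 lie in corresponding partition classes, δ_j^𝐀(a) = δ_j^𝐁(b), and similarly for constraints. -/

import Mathlib

open Finset BigOperators

variable {σ : Type} [Fintype σ] [DecidableEq σ]

/-- Edge labels of the factor graph of a `σ`-structure: pairs `(S,R)` with
`S ⊆ [ar R]`. -/
abbrev FLab (ar : σ → ℕ) : Type := Σ R : σ, Finset (Fin (ar R))

/-- The type of iterated degrees (colours) after `n` refinement rounds on the labelled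
factor graph. The initial colour (a `Bool`) distinguishes elements from constraints. -/
def FColor (ar : σ → ℕ) : ℕ → Type
  | 0 => Bool
  | n + 1 => FColor ar n × Multiset (FLab ar × FColor ar n)

instance fColorDecEq (ar : σ → ℕ) : ∀ n, DecidableEq (FColor ar n)
  | 0 => inferInstanceAs (DecidableEq Bool)
  | n + 1 =>
      letI := fColorDecEq ar n
      inferInstanceAs (DecidableEq (FColor ar n × Multiset (FLab ar × FColor ar n)))

/-- The constraints of a structure: pairs of a symbol `R` and a tuple in `R`'s relation. -/
abbrev Cstr (ar : σ → ℕ) {D : Type} (rel : ∀ R : σ, Finset (Fin (ar R) → D)) : Type :=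
  Σ R : σ, {x : Fin (ar R) → D // x ∈ rel R}

/-- The label of the factor-graph edge between an element `a` and a constraint `c`. -/
def fLabOf (ar : σ → ℕ) {D : Type} [DecidableEq D] {rel : ∀ R : σ, Finset (Fin (ar R) → D)}
    (a : D) (c : Cstr ar rel) : FLab ar :=
  ⟨c.1, Finset.univ.filter (fun i => c.2.1 i = a)⟩

/-- The iterated degree `δ_n` of a vertex of the labelled factor graph of the structure
`rel` (a vertex is either an element, `Sum.inl`, or a constraint, `Sum.inr`):
`δ_0` distinguishes elements from constraints and
`δ_{n+1}(v) = (δ_n(v), {{(ℓ_{v,w}, δ_n(w)) : w a factor-graph neighbour of v}})`. -/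
def fdeg (ar : σ → ℕ) {D : Type} [Fintype D] [DecidableEq D]
    (rel : ∀ R : σ, Finset (Fin (ar R) → D)) :
    (n : ℕ) → (D ⊕ Cstr ar rel) → FColor ar n
  | 0, Sum.inl _ => false
  | 0, Sum.inr _ => true
  | n + 1, Sum.inl a =>
      (fdeg ar rel n (Sum.inl a),
        ((Finset.univ.filter (fun c : Cstr ar rel => ∃ i, c.2.1 i = a)).val.map
          (fun c => (fLabOf ar a c, fdeg ar rel n (Sum.inr c)))))
  | n + 1, Sum.inr c =>
      (fdeg ar rel n (Sum.inr c),
        ((Finset.univ.filter (fun a : D => ∃ i, c.2.1 i = a)).val.map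
          (fun a => (fLabOf ar a c, fdeg ar rel n (Sum.inl a)))))

/-- Two similar structures have the same iterated degree sequence if, for every `n`,
the multisets of iterated degrees of their factor-graph vertices coincide. -/
def SameIDS (ar : σ → ℕ) {D₁ D₂ : Type} [Fintype D₁] [DecidableEq D₁]
    [Fintype D₂] [DecidableEq D₂]
    (rel₁ : ∀ R : σ, Finset (Fin (ar R) → D₁))
    (rel₂ : ∀ R : σ, Finset (Fin (ar R) → D₂)) : Prop :=
  ∀ n : ℕ,
    Multiset.map (fdeg ar rel₁ n) Finset.univ.val =
      Multiset.map (fdeg ar rel₂ n) Finset.univ.val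

/-- A homomorphism between similar relational structures. -/
def IsHom (ar : σ → ℕ) {DX DA : Type}
    (relX : ∀ R : σ, Finset (Fin (ar R) → DX))
    (relA : ∀ R : σ, Finset (Fin (ar R) → DA))
    (h : DX → DA) : Prop :=
  ∀ (R : σ) (x : Fin (ar R) → DX), x ∈ relX R → (fun i => h (x i)) ∈ relA R

/-- A pair of colourings (of elements by `I` and of constraints by `J`) of a structure
is an equitable partition with parameters `cpar`, `dpar` if, for every element class,
constraint class and label, the number of constraints of the given class incident to a
fixed element with the given label equals `cpar`, and dually for `dpar`. -/
def IsEquitableRel (ar : σ → ℕ) {D I J : Type} [Fintype D] [DecidableEq D]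
    [DecidableEq I] [DecidableEq J]
    (rel : ∀ R : σ, Finset (Fin (ar R) → D))
    (cE : D → I) (cC : Cstr ar rel → J)
    (cpar : I → J → FLab ar → ℕ) (dpar : J → I → FLab ar → ℕ) : Prop :=
  (∀ (a : D) (j : J) (ℓ : FLab ar),
      (Finset.univ.filter (fun c : Cstr ar rel =>
        cC c = j ∧ (∃ i, c.2.1 i = a) ∧ fLabOf ar a c = ℓ)).card = cpar (cE a) j ℓ) ∧
  (∀ (c : Cstr ar rel) (i : I) (ℓ : FLab ar),
      (Finset.univ.filter (fun a : D =>
        cE a = i ∧ (∃ i', c.2.1 i' = a) ∧ fLabOf ar a c = ℓ)).card = dpar (cC c) i ℓ)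

lemma aux_image {α β J : Type*} [Fintype α] [Fintype β] [DecidableEq J]
    (cA : α → J) (cB : β → J)
    (h : ∀ j, (Finset.univ.filter (fun x => cA x = j)).card
        = (Finset.univ.filter (fun x => cB x = j)).card) :
    Finset.univ.image cA = Finset.univ.image cB := by
  ext j
  simp only [Finset.mem_image, Finset.mem_univ, true_and]
  constructor
  · rintro ⟨a, rfl⟩
    have : 0 < (Finset.univ.filter (fun x => cB x = cA a)).card := by
      rw [← h]; exact Finset.card_pos.mpr ⟨a, by simp⟩
    obtain ⟨x, hx⟩ := Finset.card_pos.mp this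
    exact ⟨x, (Finset.mem_filter.mp hx).2⟩
  · rintro ⟨b, rfl⟩
    have : 0 < (Finset.univ.filter (fun x => cA x = cB b)).card := by
      rw [h]; exact Finset.card_pos.mpr ⟨b, by simp⟩
    obtain ⟨x, hx⟩ := Finset.card_pos.mp this
    exact ⟨x, (Finset.mem_filter.mp hx).2⟩

lemma aux_count {α J : Type*} [Fintype α] [DecidableEq α] [DecidableEq J]
    (cl : α → J) (P : α → Prop) [DecidablePred P] (Q : J → Prop) [DecidablePred Q]
    (par : J → ℕ)
    (hpar : ∀ j, (Finset.univ.filter (fun x => cl x = j ∧ P x)).card = par j) :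
    (Finset.univ.filter (fun x => P x ∧ Q (cl x))).card
      = ∑ j ∈ (Finset.univ.image cl).filter Q, par j := by
  rw [Finset.card_eq_sum_card_fiberwise (f := cl)
      (t := (Finset.univ.image cl).filter Q)
      (fun x hx => by
        simp only [Finset.mem_coe, Finset.mem_filter, Finset.mem_univ, true_and] at hx
        simp only [Finset.mem_coe, Finset.mem_filter, Finset.mem_image, Finset.mem_univ, true_and]
        exact ⟨⟨x, rfl⟩, hx.2⟩)]
  refine Finset.sum_congr rfl fun j hj => ?_
  have hQj : Q j := (Finset.mem_filter.mp hj).2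
  rw [← hpar j]
  congr 1
  ext x
  simp only [Finset.mem_filter, Finset.mem_univ, true_and]
  constructor
  · rintro ⟨⟨hP, _⟩, he⟩; exact ⟨he, hP⟩
  · rintro ⟨he, hP⟩; exact ⟨⟨hP, he ▸ hQj⟩, he⟩

lemma aux_count2 {α J : Type*} [Fintype α] [DecidableEq α] [DecidableEq J]
    (cl : α → J) (Q : J → Prop) [DecidablePred Q]
    (par : J → ℕ)
    (hpar : ∀ j, (Finset.univ.filter (fun x => cl x = j)).card = par j) :
    (Finset.univ.filter (fun x => Q (cl x))).card
      = ∑ j ∈ (Finset.univ.image cl).filter Q, par j := by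
  rw [Finset.card_eq_sum_card_fiberwise (f := cl)
      (t := (Finset.univ.image cl).filter Q)
      (fun x hx => by
        simp only [Finset.mem_coe, Finset.mem_filter, Finset.mem_univ, true_and] at hx
        simp only [Finset.mem_coe, Finset.mem_filter, Finset.mem_image, Finset.mem_univ, true_and]
        exact ⟨⟨x, rfl⟩, hx⟩)]
  refine Finset.sum_congr rfl fun j hj => ?_
  have hQj : Q j := (Finset.mem_filter.mp hj).2
  rw [← hpar j]
  congr 1
  ext x
  simp only [Finset.mem_filter, Finset.mem_univ, true_and]
  constructor
  · rintro ⟨_, he⟩; exact he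
  · rintro he; exact ⟨he ▸ hQj, he⟩

lemma count_map_filter {α β : Type*} [DecidableEq β] [Fintype α]
    (p : α → Prop) [DecidablePred p] (f : α → β) (b : β) :
    Multiset.count b ((Finset.univ.filter p).val.map f)
      = (Finset.univ.filter (fun x => p x ∧ b = f x)).card := by
  rw [Multiset.count_map, ← Finset.filter_val, Finset.filter_filter]
  rfl

lemma count_map_univ {α β : Type*} [DecidableEq β] [Fintype α]
    (f : α → β) (b : β) :
    Multiset.count b (Finset.univ.val.map f)
      = (Finset.univ.filter (fun x => b = f x)).card := by
  rw [Multiset.count_map, ← Finset.filter_val]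
  rfl

/-- If two similar structures have a common equitable partition (equitable partitions
with the same parameters and corresponding classes of equal sizes), then corresponding
classes have equal iterated degrees at every level, and in particular the two
structures have the same iterated degree sequence. -/
theorem stmt18 (ar : σ → ℕ) {DA DB I J : Type}
    [Fintype DA] [DecidableEq DA] [Fintype DB] [DecidableEq DB]
    [DecidableEq I] [DecidableEq J]
    (relA : ∀ R : σ, Finset (Fin (ar R) → DA))
    (relB : ∀ R : σ, Finset (Fin (ar R) → DB))
    (cEA : DA → I) (cCA : Cstr ar relA → J)
    (cEB : DB → I) (cCB : Cstr ar relB → J)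
    (cpar : I → J → FLab ar → ℕ) (dpar : J → I → FLab ar → ℕ)
    (hA : IsEquitableRel ar relA cEA cCA cpar dpar)
    (hB : IsEquitableRel ar relB cEB cCB cpar dpar)
    (hsizeE : ∀ i : I,
      (Finset.univ.filter (fun a : DA => cEA a = i)).card =
        (Finset.univ.filter (fun b : DB => cEB b = i)).card)
    (hsizeC : ∀ j : J,
      (Finset.univ.filter (fun c : Cstr ar relA => cCA c = j)).card =
        (Finset.univ.filter (fun c : Cstr ar relB => cCB c = j)).card) :
    (∀ (n : ℕ) (a : DA) (b : DB), cEA a = cEB b →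
      fdeg ar relA n (Sum.inl a) = fdeg ar relB n (Sum.inl b)) ∧
    (∀ (n : ℕ) (cA : Cstr ar relA) (cB : Cstr ar relB), cCA cA = cCB cB →
      fdeg ar relA n (Sum.inr cA) = fdeg ar relB n (Sum.inr cB)) ∧
    SameIDS ar relA relB := by
  classical
  have himC : Finset.univ.image cCA = Finset.univ.image cCB := aux_image _ _ hsizeC
  have himE : Finset.univ.image cEA = Finset.univ.image cEB := aux_image _ _ hsizeE
  have main : ∀ n : ℕ,
      (∀ (a : DA) (b : DB), cEA a = cEB b →
        fdeg ar relA n (Sum.inl a) = fdeg ar relB n (Sum.inl b)) ∧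
      (∀ (cA : Cstr ar relA) (cB : Cstr ar relB), cCA cA = cCB cB →
        fdeg ar relA n (Sum.inr cA) = fdeg ar relB n (Sum.inr cB)) := by
    intro n
    induction n with
    | zero => exact ⟨fun _ _ _ => rfl, fun _ _ _ => rfl⟩
    | succ n ih =>
      obtain ⟨ihE, ihC⟩ := ih
      constructor
      · intro a b hab
        have h2 :
            ((Finset.univ.filter (fun c : Cstr ar relA => ∃ i, c.2.1 i = a)).val.map
              (fun c => (fLabOf ar a c, fdeg ar relA n (Sum.inr c))))
            = ((Finset.univ.filter (fun c : Cstr ar relB => ∃ i, c.2.1 i = b)).val.map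
              (fun c => (fLabOf ar b c, fdeg ar relB n (Sum.inr c)))) := by
          ext ⟨ℓ, γ⟩
          rw [count_map_filter, count_map_filter]
          set Q : J → Prop :=
            fun j => ∃ c' : Cstr ar relB, cCB c' = j ∧ fdeg ar relB n (Sum.inr c') = γ
            with hQdef
          have keyA : ∀ c : Cstr ar relA,
              fdeg ar relA n (Sum.inr c) = γ ↔ Q (cCA c) := by
            intro c
            constructor
            · intro h
              have hpos : 0 < (Finset.univ.filter
                  (fun c' : Cstr ar relB => cCB c' = cCA c)).card := by
                rw [← hsizeC]; exact Finset.card_pos.mpr ⟨c, by simp⟩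
              obtain ⟨c', hc'⟩ := Finset.card_pos.mp hpos
              have hcc := (Finset.mem_filter.mp hc').2
              exact ⟨c', hcc, by rw [← ihC c c' hcc.symm, h]⟩
            · rintro ⟨c', hcc, hγ⟩
              rw [ihC c c' hcc.symm, hγ]
          have keyB : ∀ c : Cstr ar relB,
              fdeg ar relB n (Sum.inr c) = γ ↔ Q (cCB c) := by
            intro c
            constructor
            · intro h; exact ⟨c, rfl, h⟩
            · rintro ⟨c', hcc, hγ⟩
              have hpos : 0 < (Finset.univ.filter
                  (fun cA' : Cstr ar relA => cCA cA' = cCB c)).card := by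
                rw [hsizeC]; exact Finset.card_pos.mpr ⟨c, by simp⟩
              obtain ⟨cA', hcA'⟩ := Finset.card_pos.mp hpos
              have hcc' := (Finset.mem_filter.mp hcA').2
              rw [← ihC cA' c hcc', ihC cA' c' (hcc'.trans hcc.symm), hγ]
          have eA : Finset.univ.filter (fun c : Cstr ar relA =>
                (∃ i, c.2.1 i = a) ∧ (ℓ, γ) = (fLabOf ar a c, fdeg ar relA n (Sum.inr c)))
              = Finset.univ.filter (fun c : Cstr ar relA =>
                ((∃ i, c.2.1 i = a) ∧ fLabOf ar a c = ℓ) ∧ Q (cCA c)) := by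
            ext c
            simp only [Finset.mem_filter, Finset.mem_univ, true_and, Prod.mk.injEq]
            constructor
            · rintro ⟨hi, hl, hg⟩; exact ⟨⟨hi, hl.symm⟩, (keyA c).mp hg.symm⟩
            · rintro ⟨⟨hi, hl⟩, hq⟩; exact ⟨hi, hl.symm, ((keyA c).mpr hq).symm⟩
          have eB : Finset.univ.filter (fun c : Cstr ar relB =>
                (∃ i, c.2.1 i = b) ∧ (ℓ, γ) = (fLabOf ar b c, fdeg ar relB n (Sum.inr c)))
              = Finset.univ.filter (fun c : Cstr ar relB =>
                ((∃ i, c.2.1 i = b) ∧ fLabOf ar b c = ℓ) ∧ Q (cCB c)) := by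
            ext c
            simp only [Finset.mem_filter, Finset.mem_univ, true_and, Prod.mk.injEq]
            constructor
            · rintro ⟨hi, hl, hg⟩; exact ⟨⟨hi, hl.symm⟩, (keyB c).mp hg.symm⟩
            · rintro ⟨⟨hi, hl⟩, hq⟩; exact ⟨hi, hl.symm, ((keyB c).mpr hq).symm⟩
          rw [eA, eB,
            aux_count cCA _ Q (fun j => cpar (cEA a) j ℓ) (fun j => hA.1 a j ℓ),
            aux_count cCB _ Q (fun j => cpar (cEB b) j ℓ) (fun j => hB.1 b j ℓ),
            himC, hab]
        simp only [fdeg]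
        exact congrArg₂ Prod.mk (ihE a b hab) h2
      · intro cA cB hc
        have h2 :
            ((Finset.univ.filter (fun x : DA => ∃ i, cA.2.1 i = x)).val.map
              (fun x => (fLabOf ar x cA, fdeg ar relA n (Sum.inl x))))
            = ((Finset.univ.filter (fun x : DB => ∃ i, cB.2.1 i = x)).val.map
              (fun x => (fLabOf ar x cB, fdeg ar relB n (Sum.inl x)))) := by
          ext ⟨ℓ, γ⟩
          rw [count_map_filter, count_map_filter]
          set Q : I → Prop :=
            fun i => ∃ b' : DB, cEB b' = i ∧ fdeg ar relB n (Sum.inl b') = γ with hQdef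
          have keyA : ∀ x : DA,
              fdeg ar relA n (Sum.inl x) = γ ↔ Q (cEA x) := by
            intro x
            constructor
            · intro h
              have hpos : 0 < (Finset.univ.filter
                  (fun b' : DB => cEB b' = cEA x)).card := by
                rw [← hsizeE]; exact Finset.card_pos.mpr ⟨x, by simp⟩
              obtain ⟨b', hb'⟩ := Finset.card_pos.mp hpos
              have hbb := (Finset.mem_filter.mp hb').2
              exact ⟨b', hbb, by rw [← ihE x b' hbb.symm, h]⟩
            · rintro ⟨b', hbb, hγ⟩
              rw [ihE x b' hbb.symm, hγ]
          have keyB : ∀ x : DB,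
              fdeg ar relB n (Sum.inl x) = γ ↔ Q (cEB x) := by
            intro x
            constructor
            · intro h; exact ⟨x, rfl, h⟩
            · rintro ⟨b', hbb, hγ⟩
              have hpos : 0 < (Finset.univ.filter
                  (fun a' : DA => cEA a' = cEB x)).card := by
                rw [hsizeE]; exact Finset.card_pos.mpr ⟨x, by simp⟩
              obtain ⟨a', ha'⟩ := Finset.card_pos.mp hpos
              have haa := (Finset.mem_filter.mp ha').2
              rw [← ihE a' x haa, ihE a' b' (haa.trans hbb.symm), hγ]
          have eA : Finset.univ.filter (fun x : DA =>
                (∃ i, cA.2.1 i = x) ∧ (ℓ, γ) = (fLabOf ar x cA, fdeg ar relA n (Sum.inl x)))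
              = Finset.univ.filter (fun x : DA =>
                ((∃ i, cA.2.1 i = x) ∧ fLabOf ar x cA = ℓ) ∧ Q (cEA x)) := by
            ext x
            simp only [Finset.mem_filter, Finset.mem_univ, true_and, Prod.mk.injEq]
            constructor
            · rintro ⟨hi, hl, hg⟩; exact ⟨⟨hi, hl.symm⟩, (keyA x).mp hg.symm⟩
            · rintro ⟨⟨hi, hl⟩, hq⟩; exact ⟨hi, hl.symm, ((keyA x).mpr hq).symm⟩
          have eB : Finset.univ.filter (fun x : DB =>
                (∃ i, cB.2.1 i = x) ∧ (ℓ, γ) = (fLabOf ar x cB, fdeg ar relB n (Sum.inl x)))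
              = Finset.univ.filter (fun x : DB =>
                ((∃ i, cB.2.1 i = x) ∧ fLabOf ar x cB = ℓ) ∧ Q (cEB x)) := by
            ext x
            simp only [Finset.mem_filter, Finset.mem_univ, true_and, Prod.mk.injEq]
            constructor
            · rintro ⟨hi, hl, hg⟩; exact ⟨⟨hi, hl.symm⟩, (keyB x).mp hg.symm⟩
            · rintro ⟨⟨hi, hl⟩, hq⟩; exact ⟨hi, hl.symm, ((keyB x).mpr hq).symm⟩
          rw [eA, eB,
            aux_count cEA _ Q (fun i => dpar (cCA cA) i ℓ) (fun i => hA.2 cA i ℓ),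
            aux_count cEB _ Q (fun i => dpar (cCB cB) i ℓ) (fun i => hB.2 cB i ℓ),
            himE, hc]
        simp only [fdeg]
        exact congrArg₂ Prod.mk (ihC cA cB hc) h2
  refine ⟨fun n => (main n).1, fun n => (main n).2, ?_⟩
  intro n
  obtain ⟨mE, mC⟩ := main n
  have hEl : Multiset.map (fun a : DA => fdeg ar relA n (Sum.inl a)) Finset.univ.val
      = Multiset.map (fun b : DB => fdeg ar relB n (Sum.inl b)) Finset.univ.val := by
    ext γ
    rw [count_map_univ, count_map_univ]
    set Q : I → Prop :=
      fun i => ∃ b' : DB, cEB b' = i ∧ fdeg ar relB n (Sum.inl b') = γ with hQdef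
    have keyA : ∀ x : DA, γ = fdeg ar relA n (Sum.inl x) ↔ Q (cEA x) := by
      intro x
      constructor
      · intro h
        have hpos : 0 < (Finset.univ.filter (fun b' : DB => cEB b' = cEA x)).card := by
          rw [← hsizeE]; exact Finset.card_pos.mpr ⟨x, by simp⟩
        obtain ⟨b', hb'⟩ := Finset.card_pos.mp hpos
        have hbb := (Finset.mem_filter.mp hb').2
        exact ⟨b', hbb, by rw [← mE x b' hbb.symm, ← h]⟩
      · rintro ⟨b', hbb, hγ⟩
        rw [mE x b' hbb.symm, hγ]
    have keyB : ∀ x : DB, γ = fdeg ar relB n (Sum.inl x) ↔ Q (cEB x) := by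
      intro x
      constructor
      · intro h; exact ⟨x, rfl, h.symm⟩
      · rintro ⟨b', hbb, hγ⟩
        have hpos : 0 < (Finset.univ.filter (fun a' : DA => cEA a' = cEB x)).card := by
          rw [hsizeE]; exact Finset.card_pos.mpr ⟨x, by simp⟩
        obtain ⟨a', ha'⟩ := Finset.card_pos.mp hpos
        have haa := (Finset.mem_filter.mp ha').2
        rw [← mE a' x haa, mE a' b' (haa.trans hbb.symm), hγ]
    have eA : Finset.univ.filter (fun x : DA => γ = fdeg ar relA n (Sum.inl x))
        = Finset.univ.filter (fun x : DA => Q (cEA x)) := by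
      ext x
      simp only [Finset.mem_filter, Finset.mem_univ, true_and]
      exact keyA x
    have eB : Finset.univ.filter (fun x : DB => γ = fdeg ar relB n (Sum.inl x))
        = Finset.univ.filter (fun x : DB => Q (cEB x)) := by
      ext x
      simp only [Finset.mem_filter, Finset.mem_univ, true_and]
      exact keyB x
    rw [eA, eB,
      aux_count2 cEA Q
        (fun i => (Finset.univ.filter (fun b : DB => cEB b = i)).card)
        (fun i => hsizeE i),
      aux_count2 cEB Q
        (fun i => (Finset.univ.filter (fun b : DB => cEB b = i)).card)
        (fun i => rfl),
      himE]
  have hCs : Multiset.map (fun c : Cstr ar relA => fdeg ar relA n (Sum.inr c)) Finset.univ.val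
      = Multiset.map (fun c : Cstr ar relB => fdeg ar relB n (Sum.inr c)) Finset.univ.val := by
    ext γ
    rw [count_map_univ, count_map_univ]
    set Q : J → Prop :=
      fun j => ∃ c' : Cstr ar relB, cCB c' = j ∧ fdeg ar relB n (Sum.inr c') = γ with hQdef
    have keyA : ∀ c : Cstr ar relA, γ = fdeg ar relA n (Sum.inr c) ↔ Q (cCA c) := by
      intro c
      constructor
      · intro h
        have hpos : 0 < (Finset.univ.filter
            (fun c' : Cstr ar relB => cCB c' = cCA c)).card := by
          rw [← hsizeC]; exact Finset.card_pos.mpr ⟨c, by simp⟩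
        obtain ⟨c', hc'⟩ := Finset.card_pos.mp hpos
        have hcc := (Finset.mem_filter.mp hc').2
        exact ⟨c', hcc, by rw [← mC c c' hcc.symm, ← h]⟩
      · rintro ⟨c', hcc, hγ⟩
        rw [mC c c' hcc.symm, hγ]
    have keyB : ∀ c : Cstr ar relB, γ = fdeg ar relB n (Sum.inr c) ↔ Q (cCB c) := by
      intro c
      constructor
      · intro h; exact ⟨c, rfl, h.symm⟩
      · rintro ⟨c', hcc, hγ⟩
        have hpos : 0 < (Finset.univ.filter
            (fun cA' : Cstr ar relA => cCA cA' = cCB c)).card := by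
          rw [hsizeC]; exact Finset.card_pos.mpr ⟨c, by simp⟩
        obtain ⟨cA', hcA'⟩ := Finset.card_pos.mp hpos
        have hcc' := (Finset.mem_filter.mp hcA').2
        rw [← mC cA' c hcc', mC cA' c' (hcc'.trans hcc.symm), hγ]
    have eA : Finset.univ.filter (fun c : Cstr ar relA => γ = fdeg ar relA n (Sum.inr c))
        = Finset.univ.filter (fun c : Cstr ar relA => Q (cCA c)) := by
      ext c
      simp only [Finset.mem_filter, Finset.mem_univ, true_and]
      exact keyA c
    have eB : Finset.univ.filter (fun c : Cstr ar relB => γ = fdeg ar relB n (Sum.inr c))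
        = Finset.univ.filter (fun c : Cstr ar relB => Q (cCB c)) := by
      ext c
      simp only [Finset.mem_filter, Finset.mem_univ, true_and]
      exact keyB c
    rw [eA, eB,
      aux_count2 cCA Q
        (fun j => (Finset.univ.filter (fun c : Cstr ar relB => cCB c = j)).card)
        (fun j => hsizeC j),
      aux_count2 cCB Q
        (fun j => (Finset.univ.filter (fun c : Cstr ar relB => cCB c = j)).card)
        (fun j => rfl),
      himC]
  show Multiset.map (fdeg ar relA n) Finset.univ.val
      = Multiset.map (fdeg ar relB n) Finset.univ.val
  rw [← Finset.univ_disjSum_univ (α := DA), ← Finset.univ_disjSum_univ (α := DB),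
    Finset.val_disjSum, Finset.val_disjSum]
  unfold Multiset.disjSum
  rw [Multiset.map_add, Multiset.map_add, Multiset.map_map, Multiset.map_map,
    Multiset.map_map, Multiset.map_map]
  simp only [Function.comp]
  rw [hEl, hCs]
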